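/- For all integers n ≥ 1 and r ≥ 0, the rational number ∑_{a=1}^{n+r} C_{n+r}(a) · (∑_{b=1}^{a} b^n) equals (−1)^n·B_n/(n+r) if r ≥ 1, and equals (−1)^n·B_n/n + (−1)^{n−1}·(n−1)!/(n+1) if r = 0. -/

import Mathlib

open Finset


def D (m j : ℕ) : ℚ := ∑ a ∈ range (m+1), (-1:ℚ)^a * (m.choose a) * (a:ℚ)^j

lemma step1 (m : ℕ) (f : ℕ → ℚ) :
    ∑ a ∈ range (m+2), (-1:ℚ)^a * ((m+1).choose a) * f a
      = ∑ a ∈ range (m+1), (-1:ℚ)^a * (m.choose a) * (f a - f (a+1)) := by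
  rw [Finset.sum_range_succ' (fun a => (-1:ℚ)^a * ((m+1).choose a) * f a) (m+1)]
  have h1 : ∀ a ∈ range (m+1), (-1:ℚ)^a * (m.choose a) * (f a - f (a+1))
      = (-1:ℚ)^a * (m.choose a) * f a + (-1:ℚ)^(a+1) * (m.choose a) * f (a+1) := by
    intro a _; ring
  rw [Finset.sum_congr rfl h1, Finset.sum_add_distrib]
  have h2 : ∑ a ∈ range (m+1), (-1:ℚ)^a * (m.choose a) * f a
      = (-1:ℚ)^0 * (m.choose 0) * f 0
        + ∑ a ∈ range (m+1), (-1:ℚ)^(a+1) * (m.choose (a+1)) * f (a+1) := by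
    rw [Finset.sum_range_succ (fun a => (-1:ℚ)^(a+1) * (m.choose (a+1)) * f (a+1)) m]
    rw [Nat.choose_succ_self]
    rw [Finset.sum_range_succ' (fun a => (-1:ℚ)^a * (m.choose a) * f a) m]
    push_cast
    ring
  rw [h2]
  have h3 : ∀ a ∈ range (m+1), (-1:ℚ)^(a+1) * ((m+1).choose (a+1)) * f (a+1)
      = (-1:ℚ)^(a+1) * (m.choose a) * f (a+1) + (-1:ℚ)^(a+1) * (m.choose (a+1)) * f (a+1) := by
    intro a _
    rw [Nat.choose_succ_succ]
    push_cast
    ring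
  rw [Finset.sum_congr rfl h3, Finset.sum_add_distrib]
  simp [Nat.choose_zero_right]
  ring

lemma D_succ (m j : ℕ) : D (m+1) j = -∑ i ∈ range j, (j.choose i : ℚ) * D m i := by
  unfold D
  rw [show m + 1 + 1 = m + 2 from rfl, step1 m (fun a => (a:ℚ)^j)]
  have key : ∀ a : ℕ, ((a:ℚ))^j - ((a:ℚ)+1)^j = -∑ i ∈ range j, (j.choose i : ℚ) * (a:ℚ)^i := by
    intro a
    have hb : ((a:ℚ)+1)^j = ∑ i ∈ range (j+1), (a:ℚ)^i * 1^(j-i) * (j.choose i) := add_pow _ _ _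
    rw [Finset.sum_range_succ] at hb
    simp only [one_pow, mul_one, Nat.choose_self, Nat.cast_one] at hb
    rw [hb]
    rw [show ∀ s : ℚ, (a:ℚ)^j - (s + (a:ℚ)^j) = -s from fun s => by ring]
    congr 1
    exact Finset.sum_congr rfl fun i _ => by ring
  have h1 : ∀ a ∈ range (m+1), (-1:ℚ)^a * (m.choose a) * (((a:ℕ):ℚ)^j - (((a+1:ℕ)):ℚ)^j)
      = ∑ i ∈ range j, -((j.choose i : ℚ) * ((-1:ℚ)^a * (m.choose a) * (a:ℚ)^i)) := by
    intro a _
    push_cast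
    rw [key a, mul_neg, Finset.mul_sum, ← Finset.sum_neg_distrib]
    exact Finset.sum_congr rfl fun i _ => by ring
  rw [Finset.sum_congr rfl h1, Finset.sum_comm]
  rw [← Finset.sum_neg_distrib]
  refine Finset.sum_congr rfl fun i _ => ?_
  simp [D, Finset.mul_sum]


lemma D_lt : ∀ m j, j < m → D m j = 0 := by
  intro m
  induction m with
  | zero => intro j hj; omega
  | succ m ih =>
    intro j hj
    rw [D_succ, neg_eq_zero]
    refine Finset.sum_eq_zero fun i hi => ?_
    rw [ih i (by simp at hi; omega), mul_zero]

lemma D_eq : ∀ m, D m m = (-1:ℚ)^m * (Nat.factorial m) := by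
  intro m
  induction m with
  | zero => simp [D]
  | succ m ih =>
    rw [D_succ]
    rw [Finset.sum_range_succ]
    rw [Finset.sum_eq_zero fun i hi => by rw [D_lt m i (by simp at hi; omega), mul_zero]]
    rw [ih, Nat.choose_succ_self_right]
    push_cast [Nat.factorial_succ]
    ring

lemma innerAltSum (m j : ℕ) (hm : 1 ≤ m) :
    ∑ a ∈ Icc 1 m, (-1:ℚ)^(a-1) * (m.choose a) * (a:ℚ)^j = (0:ℚ)^j - D m j := by
  have h : D m j = (0:ℚ)^j + ∑ a ∈ Icc 1 m, (-1:ℚ)^a * (m.choose a) * (a:ℚ)^j := by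
    rw [D, Finset.range_eq_Ico, Finset.sum_eq_sum_Ico_succ_bot (by omega)]
    rw [Finset.Ico_add_one_right_eq_Icc]
    simp
  rw [h]
  have h2 : ∀ a ∈ Icc 1 m, (-1:ℚ)^a * (m.choose a) * (a:ℚ)^j
      = -((-1:ℚ)^(a-1) * (m.choose a) * (a:ℚ)^j) := by
    intro a ha
    simp only [mem_Icc] at ha
    rw [show a = (a-1)+1 by omega, pow_succ]
    simp only [Nat.add_sub_cancel]
    ring
  rw [Finset.sum_congr rfl h2, Finset.sum_neg_distrib]
  ring

/-- The rational numbers `C_n(a) = ((-1)^(a-1) / (n·a)) · binom(n,a)`. -/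
def C (n a : ℕ) : ℚ := ((-1 : ℚ) ^ (a - 1) / ((n : ℚ) * (a : ℚ))) * (n.choose a : ℚ)

theorem stmt_3 (n r : ℕ) (hn : 1 ≤ n) :
    (∑ a ∈ Finset.Icc 1 (n + r), C (n + r) a * (∑ b ∈ Finset.Icc 1 a, (b : ℚ) ^ n))
      = if 1 ≤ r then
          (-1 : ℚ) ^ n * bernoulli n / ((n : ℚ) + (r : ℚ))
        else
          (-1 : ℚ) ^ n * bernoulli n / (n : ℚ)
            + (-1 : ℚ) ^ (n - 1) * (Nat.factorial (n - 1) : ℚ) / ((n : ℚ) + 1) := by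
  have hm : 1 ≤ n + r := by omega
  have hm0 : ((n + r : ℕ) : ℚ) ≠ 0 := Nat.cast_ne_zero.mpr (by omega)
  have hn1 : ((n : ℚ) + 1) ≠ 0 := by positivity
  have hterm : ∀ a ∈ Icc 1 (n + r), C (n + r) a * (∑ b ∈ Icc 1 a, (b : ℚ) ^ n)
      = ∑ i ∈ range (n + 1),
          (bernoulli' i * ((n + 1).choose i : ℚ) / (((n : ℚ) + 1) * ((n + r : ℕ) : ℚ)))
            * ((-1 : ℚ) ^ (a - 1) * ((n + r).choose a : ℚ) * (a : ℚ) ^ (n - i)) := by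
    intro a ha
    simp only [mem_Icc] at ha
    have hS : (∑ b ∈ Icc 1 a, (b : ℚ) ^ n)
        = ∑ i ∈ range (n + 1),
            bernoulli' i * ((n + 1).choose i : ℚ) * (a : ℚ) ^ (n + 1 - i) / ((n : ℚ) + 1) := by
      rw [← Finset.Ico_add_one_right_eq_Icc]
      have := sum_Ico_pow a n
      push_cast at this ⊢
      exact this
    rw [hS, Finset.mul_sum]
    refine Finset.sum_congr rfl fun i hi => ?_
    simp only [mem_range] at hi
    have hpow : (a : ℚ) ^ (n + 1 - i) = (a : ℚ) * (a : ℚ) ^ (n - i) := by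
      rw [show n + 1 - i = (n - i) + 1 by omega, pow_succ]; ring
    have ha0 : (a : ℚ) ≠ 0 := Nat.cast_ne_zero.mpr (by omega)
    rw [C, hpow]
    field_simp
  rw [Finset.sum_congr rfl hterm, Finset.sum_comm]
  have hcol : ∀ i ∈ range (n + 1),
      ∑ a ∈ Icc 1 (n + r),
          (bernoulli' i * ((n + 1).choose i : ℚ) / (((n : ℚ) + 1) * ((n + r : ℕ) : ℚ)))
            * ((-1 : ℚ) ^ (a - 1) * ((n + r).choose a : ℚ) * (a : ℚ) ^ (n - i))
        = (bernoulli' i * ((n + 1).choose i : ℚ) / (((n : ℚ) + 1) * ((n + r : ℕ) : ℚ)))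
            * ((0 : ℚ) ^ (n - i) - D (n + r) (n - i)) := by
    intro i _
    rw [← Finset.mul_sum, innerAltSum _ _ hm]
  rw [Finset.sum_congr rfl hcol]
  by_cases hr : 1 ≤ r
  · rw [if_pos hr]
    rw [Finset.sum_eq_single_of_mem n (by simp)]
    · rw [D_lt (n + r) (n - n) (by omega)]
      simp only [Nat.sub_self, pow_zero, sub_zero, mul_one, Nat.choose_succ_self_right]
      rw [bernoulli'_eq_bernoulli]
      push_cast
      field_simp
    · intro i hi hne
      simp only [mem_range] at hi
      rw [D_lt (n + r) (n - i) (by omega), zero_pow (by omega), sub_zero, mul_zero]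
  · rw [if_neg hr]
    have hr0 : r = 0 := by omega
    subst hr0
    obtain ⟨k, rfl⟩ : ∃ k, n = k + 1 := ⟨n - 1, by omega⟩
    simp only [Nat.add_zero] at *
    rw [Finset.sum_range_succ, Finset.sum_range_succ']
    rw [Finset.sum_eq_zero fun i hi => by
      simp only [mem_range] at hi
      rw [D_lt (k + 1) (k + 1 - (i + 1)) (by omega), zero_pow (by omega), sub_zero, mul_zero]]
    rw [D_lt (k + 1) (k + 1 - (k + 1)) (by omega)]
    rw [show k + 1 - 0 = k + 1 from rfl, D_eq (k + 1)]
    rw [zero_pow (by omega)]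
    simp only [Nat.sub_self, pow_zero, sub_zero, mul_one, Nat.choose_succ_self_right,
      Nat.choose_zero_right, Nat.cast_one, bernoulli'_zero, one_mul, zero_add,
      Nat.add_sub_cancel, Nat.factorial_succ, bernoulli'_eq_bernoulli, zero_sub, bernoulli_zero]
    have hk2 : ((k : ℚ) + 1 + 1) ≠ 0 := by positivity
    have hk1 : ((k : ℚ) + 1) ≠ 0 := by positivity
    have hfac : (Nat.factorial k : ℚ) ≠ 0 := Nat.cast_ne_zero.mpr (Nat.factorial_ne_zero k)
    push_cast
    field_simp
    ring
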